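/- Let N ≥ 1, τc > 0, τ0 > 0, τ1 real, D = 2τ1 + τ0 - τc, and assume 0 < D < τ0 and τ0 < τc/N + D (i.e. R2 := 2/(τ0 - τc/N - D) < 0). With f(R) = (1/2)·tr(L_c·F(τ1)·C(R)·F(τ0)·C(R)·F(τ1)) as above, for every R with R2 - 2/τ0 < R < R2 we have -1 < f(R) < 1. -/

import Mathlib

set_option maxHeartbeats 1000000


theorem stmt_10 (N : ℕ) (hN : 1 ≤ N) (τc τ0 τ1 : ℝ) (hτc : 0 < τc) (hτ0 : 0 < τ0)
    (hD : 0 < 2 * τ1 + τ0 - τc) (hD' : 2 * τ1 + τ0 - τc < τ0)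
    (hneg : τ0 < τc / N + (2 * τ1 + τ0 - τc))
    (R : ℝ)
    (hR1 : 2 / (τ0 - τc / N - (2 * τ1 + τ0 - τc)) - 2 / τ0 < R)
    (hR2 : R < 2 / (τ0 - τc / N - (2 * τ1 + τ0 - τc))) :
    -1 < (1 / 2) * Matrix.trace
        (!![1 - 2 * (N : ℝ), ((N : ℝ) - 1) * τc; 4 * (N : ℝ) / τc, 1 - 2 * (N : ℝ)] *
          !![(1 : ℝ), τ1; 0, 1] * !![(1 : ℝ), 0; R, 1] * !![(1 : ℝ), τ0; 0, 1] *
          !![(1 : ℝ), 0; R, 1] * !![(1 : ℝ), τ1; 0, 1])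
    ∧ (1 / 2) * Matrix.trace
        (!![1 - 2 * (N : ℝ), ((N : ℝ) - 1) * τc; 4 * (N : ℝ) / τc, 1 - 2 * (N : ℝ)] *
          !![(1 : ℝ), τ1; 0, 1] * !![(1 : ℝ), 0; R, 1] * !![(1 : ℝ), τ0; 0, 1] *
          !![(1 : ℝ), 0; R, 1] * !![(1 : ℝ), τ1; 0, 1]) < 1 := by
  have hn1 : (1 : ℝ) ≤ (N : ℝ) := by exact_mod_cast hN
  have hn0 : (0 : ℝ) < (N : ℝ) := by linarith
  set D : ℝ := 2 * τ1 + τ0 - τc with hDdef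
  set q : ℝ := τ0 - τc / N - D with hqdef
  have hq : q < 0 := by
    have : τ0 - D < τc / N := by linarith
    simp only [hqdef]; linarith
  have hKq : (N : ℝ) * q = (N : ℝ) * (τ0 - D) - τc := by
    rw [hqdef, mul_sub, mul_sub, mul_div_assoc', mul_div_cancel_left₀ τc (ne_of_gt hn0)]; ring
  -- from hR2 : R < 2 / q with q < 0
  have h2 : (2 : ℝ) < R * q := (lt_div_iff_of_neg hq).mp hR2
  -- from hR1 : 2 / q - 2 / τ0 < R
  have h1 : (R + 2 / τ0) * q < 2 := (div_lt_iff_of_neg hq).mp (by linarith)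
  have h1' : (R * τ0 + 2) * q < 2 * τ0 := by
    have := mul_lt_mul_of_pos_right h1 hτ0
    have hne : τ0 ≠ 0 := ne_of_gt hτ0
    calc (R * τ0 + 2) * q = (R + 2 / τ0) * q * τ0 := by field_simp
      _ < 2 * τ0 := this
  have hR0 : R < 0 := by
    nlinarith [h2]
  set T : ℝ := Matrix.trace
        (!![1 - 2 * (N : ℝ), ((N : ℝ) - 1) * τc; 4 * (N : ℝ) / τc, 1 - 2 * (N : ℝ)] *
          !![(1 : ℝ), τ1; 0, 1] * !![(1 : ℝ), 0; R, 1] * !![(1 : ℝ), τ0; 0, 1] *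
          !![(1 : ℝ), 0; R, 1] * !![(1 : ℝ), τ1; 0, 1]) with hTdef
  have hτcne : τc ≠ 0 := ne_of_gt hτc
  have hT : τc * T =
      τc * ((1 - 2 * N) * ((1 + R * τ0) + τ1 * (R * (2 + R * τ0))) * 2)
      + (N - 1) * τc ^ 2 * (R * (2 + R * τ0))
      + 4 * N * (τ0 + 2 * τ1 * (1 + R * τ0) + τ1 ^ 2 * (R * (2 + R * τ0))) := by
    rw [hTdef]
    simp only [Matrix.mul_fin_two, Matrix.trace_fin_two_of]
    field_simp
    ring
  constructor
  · -- f > -1 : 2τc(f+1) = (τ0 K R - 2(ND+τc)) ((τ0-D) R - 2) > 0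
    have key : 2 * τc * ((1/2) * T + 1) =
        (τ0 * ((N : ℝ) * (τ0 - D) - τc) * R - 2 * ((N : ℝ) * D + τc)) * ((τ0 - D) * R - 2) := by
      have : 2 * τc * ((1/2) * T + 1) = τc * T + 2 * τc := by ring
      rw [this, hT, hDdef]
      ring
    have hf1 : τ0 * ((N : ℝ) * (τ0 - D) - τc) * R - 2 * ((N : ℝ) * D + τc) < 0 := by
      -- τ0 * N * q * R < 2 N τ0 - 2 N q  using h1'
      have : τ0 * ((N : ℝ) * q) * R - 2 * ((N : ℝ) * D + τc) < 0 := by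
        nlinarith [mul_lt_mul_of_pos_left h1' hn0, hKq]
      rwa [hKq] at this
    have hf2 : (τ0 - D) * R - 2 < 0 := by nlinarith [hR0, hD']
    have hkey : (0:ℝ) < 2 * τc * ((1/2) * T + 1) := by
      rw [key]; exact mul_pos_of_neg_of_neg hf1 hf2
    nlinarith [hkey, hτc]
  · -- f < 1 : 2τc(f-1) = (K R - 2N)(τ0(τ0-D) R - 2D) < 0
    have key : 2 * τc * ((1/2) * T - 1) =
        (((N : ℝ) * (τ0 - D) - τc) * R - 2 * N) * (τ0 * (τ0 - D) * R - 2 * D) := by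
      have : 2 * τc * ((1/2) * T - 1) = τc * T - 2 * τc := by ring
      rw [this, hT, hDdef]
      ring
    have hf1 : 0 < ((N : ℝ) * (τ0 - D) - τc) * R - 2 * N := by
      rw [← hKq]
      nlinarith [mul_lt_mul_of_pos_left h2 hn0]
    have hf2 : τ0 * (τ0 - D) * R - 2 * D < 0 := by
      have := mul_neg_of_pos_of_neg (mul_pos hτ0 (by linarith : (0:ℝ) < τ0 - D)) hR0
      linarith
    have hkey : 2 * τc * ((1/2) * T - 1) < 0 := by
      rw [key]; exact mul_neg_of_pos_of_neg hf1 hf2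
    nlinarith [hkey, hτc]
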